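/- Let T be an infinite tournament whose automorphism group is 2-homogeneous (transitive on unordered 2-subsets of vertices). Then for all distinct vertices x, y, both Γ⁺(x) \ Γ⁺(y) and Γ⁺(y) \ Γ⁺(x) are infinite, unless T is a total order; consequently (if T is not a linear order) T is cofinally rigid. -/

import Mathlib

def IsTournament {X : Type*} (r : X → X → Prop) : Prop :=
  (∀ x, ¬ r x x) ∧ ∀ x y : X, x ≠ y → (r x y ↔ ¬ r y x)

section Aux

variable {X : Type*} {r : X → X → Prop}

private lemma tourn_ne (ht : IsTournament r) {x y : X} (h : r x y) : x ≠ y := by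
  rintro rfl; exact ht.1 x h

private lemma tourn_asymm (ht : IsTournament r) {x y : X} (h : r x y) : ¬ r y x :=
  (ht.2 x y (tourn_ne ht h)).mp h

private lemma tourn_total (ht : IsTournament r) {x y : X} (hne : x ≠ y) (h : ¬ r x y) :
    r y x :=
  (ht.2 y x hne.symm).mpr h

/-- Every finset of size `2^n` in a tournament contains a transitive chain of length `n`. -/
private lemma exists_chain_finset (ht : IsTournament r) :
    ∀ (n : ℕ) (S : Finset X), 2 ^ n ≤ S.card →
      ∃ c : Fin n → X, (∀ i, c i ∈ S) ∧ ∀ i j : Fin n, i < j → r (c i) (c j) := by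
  intro n
  induction n with
  | zero =>
    intro S _
    exact ⟨fun i => i.elim0, fun i => i.elim0, fun i => i.elim0⟩
  | succ n ih =>
    intro S hS
    classical
    have hpos : 0 < S.card := lt_of_lt_of_le (by positivity) hS
    obtain ⟨v, hv⟩ := Finset.card_pos.mp hpos
    set S1 := S.filter (fun s => r v s) with hS1
    set S2 := S.filter (fun s => r s v) with hS2
    have hsub : S.erase v ⊆ S1 ∪ S2 := by
      intro s hs
      obtain ⟨hsv, hsS⟩ := Finset.mem_erase.mp hs
      by_cases h : r v s
      · exact Finset.mem_union_left _ (Finset.mem_filter.mpr ⟨hsS, h⟩)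
      · exact Finset.mem_union_right _
          (Finset.mem_filter.mpr ⟨hsS, tourn_total ht (Ne.symm hsv) h⟩)
    have hcard : 2 ^ n ≤ S1.card ∨ 2 ^ n ≤ S2.card := by
      by_contra hcon
      push_neg at hcon
      have h1 : (S.erase v).card ≤ S1.card + S2.card :=
        le_trans (Finset.card_le_card hsub) (Finset.card_union_le _ _)
      have h2 : (S.erase v).card = S.card - 1 := Finset.card_erase_of_mem hv
      have h3 : 2 ^ n * 2 ≤ S.card := by rw [← pow_succ]; exact hS
      omega
    rcases hcard with hc | hc
    · obtain ⟨c', hc'1, hc'2⟩ := ih S1 hc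
      refine ⟨Fin.cases v c', ?_, ?_⟩
      · intro i
        induction i using Fin.cases with
        | zero => simpa using hv
        | succ i => simpa using (Finset.mem_filter.mp (hc'1 i)).1
      · intro i j hij
        induction j using Fin.cases with
        | zero => exact absurd hij (by simp [Fin.lt_def])
        | succ j =>
          induction i using Fin.cases with
          | zero =>
            simpa using (Finset.mem_filter.mp (hc'1 j)).2
          | succ i =>
            have : i < j := Fin.succ_lt_succ_iff.mp hij
            simpa using hc'2 i j this
    · obtain ⟨c', hc'1, hc'2⟩ := ih S2 hc
      refine ⟨fun i => if h : (i : ℕ) < n then c' ⟨i, h⟩ else v, ?_, ?_⟩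
      · intro i
        by_cases h : (i : ℕ) < n
        · simpa [h] using (Finset.mem_filter.mp (hc'1 ⟨i, h⟩)).1
        · simpa [h] using hv
      · intro i j hij
        have hij' : (i : ℕ) < (j : ℕ) := hij
        by_cases hj : (j : ℕ) < n
        · have hi : (i : ℕ) < n := lt_trans hij' hj
          have : (⟨(i : ℕ), hi⟩ : Fin n) < ⟨(j : ℕ), hj⟩ := hij'
          simpa [hi, hj] using hc'2 _ _ this
        · have hi : (i : ℕ) < n := by
            have := j.isLt
            omega
          have : r (c' ⟨i, hi⟩) v := (Finset.mem_filter.mp (hc'1 ⟨i, hi⟩)).2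
          simpa [hi, hj] using this

private lemma exists_chain_set (ht : IsTournament r) {S : Set X} (hS : S.Infinite) (m : ℕ) :
    ∃ c : Fin m → X, (∀ i, c i ∈ S) ∧ ∀ i j : Fin m, i < j → r (c i) (c j) := by
  obtain ⟨t, hts, htc⟩ := hS.exists_subset_card_eq (2 ^ m)
  obtain ⟨c, hc1, hc2⟩ := exists_chain_finset ht m t (le_of_eq htc.symm)
  exact ⟨c, fun i => hts (hc1 i), hc2⟩

private lemma infinite_of_large {S : Set X}
    (h : ∀ n, ∃ t : Finset X, ↑t ⊆ S ∧ n ≤ t.card) : S.Infinite := by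
  by_contra hfin
  rw [Set.not_infinite] at hfin
  obtain ⟨t, hts, htc⟩ := h (hfin.toFinset.card + 1)
  have hsub : t ⊆ hfin.toFinset := fun x hx => hfin.mem_toFinset.mpr (hts hx)
  have := Finset.card_le_card hsub
  omega

end Aux

section Part1

variable {X : Type*} {r : X → X → Prop}

private lemma arc_map (ht : IsTournament r)
    (h2hom : ∀ a b c d : X, a ≠ b → c ≠ d → ∃ f : Equiv.Perm X,
      (∀ x y : X, r x y ↔ r (f x) (f y)) ∧ ({f a, f b} : Set X) = {c, d})
    {a b c d : X} (hab : r a b) (hcd : r c d) :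
    ∃ f : Equiv.Perm X, (∀ x y : X, r x y ↔ r (f x) (f y)) ∧ f a = c ∧ f b = d := by
  obtain ⟨f, hf, hset⟩ := h2hom a b c d (tourn_ne ht hab) (tourn_ne ht hcd)
  have hfa : f a = c ∨ f a = d := by
    have : f a ∈ ({c, d} : Set X) := by rw [← hset]; exact Set.mem_insert _ _
    simpa using this
  have hfb : f b = c ∨ f b = d := by
    have : f b ∈ ({c, d} : Set X) := by
      rw [← hset]; exact Set.mem_insert_of_mem _ rfl
    simpa using this
  rcases hfa with h1 | h1
  · rcases hfb with h2 | h2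
    · exact absurd (f.injective (h1.trans h2.symm)) (tourn_ne ht hab)
    · exact ⟨f, hf, h1, h2⟩
  · rcases hfb with h2 | h2
    · have : r d c := by rw [← h1, ← h2]; exact (hf a b).mp hab
      exact absurd this (tourn_asymm ht hcd)
    · exact absurd (f.injective (h1.trans h2.symm)) (tourn_ne ht hab)

private lemma diff_image {f : Equiv.Perm X} (hf : ∀ x y : X, r x y ↔ r (f x) (f y)) (x y : X) :
    (f '' ({v | r x v} \ {v | r y v})) = {v | r (f x) v} \ {v | r (f y) v} := by
  ext w
  constructor
  · rintro ⟨v, ⟨hv1, hv2⟩, rfl⟩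
    exact ⟨(hf x v).mp hv1, fun hc => hv2 ((hf y v).mpr hc)⟩
  · rintro ⟨h1, h2⟩
    refine ⟨f.symm w, ⟨?_, ?_⟩, f.apply_symm_apply w⟩
    · have := (hf x (f.symm w))
      rw [f.apply_symm_apply] at this
      exact this.mpr h1
    · intro hc
      have := (hf y (f.symm w)).mp hc
      rw [f.apply_symm_apply] at this
      exact h2 this

/-- For every arc `x → y`, the difference `Γ⁺(x) \ Γ⁺(y)` is infinite. -/
private lemma diff_infinite_arc [Infinite X] (ht : IsTournament r)
    (h2hom : ∀ a b c d : X, a ≠ b → c ≠ d → ∃ f : Equiv.Perm X,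
      (∀ x y : X, r x y ↔ r (f x) (f y)) ∧ ({f a, f b} : Set X) = {c, d})
    {x y : X} (hxy : r x y) :
    ({v | r x v} \ {v | r y v}).Infinite := by
  classical
  apply infinite_of_large
  intro n
  obtain ⟨s, _, hscard⟩ :=
    (Set.infinite_univ (α := X)).exists_subset_card_eq (2 ^ (n + 2))
  obtain ⟨c, _, hc⟩ := exists_chain_finset ht (n + 2) s hscard.ge
  have hcinj : Function.Injective c := by
    intro i j hij
    by_contra hne
    rcases Ne.lt_or_gt hne with hlt | hlt
    · exact ht.1 _ (hij ▸ hc _ _ hlt)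
    · exact ht.1 _ (hij ▸ hc _ _ hlt)
  set a := c 0 with ha
  set b := c (Fin.last (n + 1)) with hb
  have hab : r a b := hc _ _ (by simp [Fin.lt_def])
  obtain ⟨g, hg, hga, hgb⟩ := arc_map ht h2hom hab hxy
  refine ⟨Finset.image (fun i : Fin (n + 1) => g (c i.succ)) Finset.univ, ?_, ?_⟩
  · intro w hw
    simp only [Finset.coe_image, Finset.coe_univ, Set.image_univ, Set.mem_range] at hw
    obtain ⟨i, rfl⟩ := hw
    have h1 : r a (c i.succ) := hc _ _ (by simp [Fin.lt_def])
    have h2 : ¬ r b (c i.succ) := by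
      by_cases hlast : i.succ = Fin.last (n + 1)
      · rw [hlast]; exact ht.1 _
      · have hlt : i.succ < Fin.last (n + 1) := lt_of_le_of_ne (Fin.le_last _) hlast
        exact tourn_asymm ht (hc _ _ hlt)
    constructor
    · show r x (g (c i.succ))
      rw [← hga]
      exact (hg a (c i.succ)).mp h1
    · show ¬ r y (g (c i.succ))
      rw [← hgb]
      intro hcon
      exact h2 ((hg b (c i.succ)).mpr hcon)
  · have : Function.Injective (fun i : Fin (n + 1) => g (c i.succ)) :=
      fun i j hij => Fin.succ_injective _ (hcinj (g.injective hij))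
    rw [Finset.card_image_of_injective _ this, Finset.card_univ, Fintype.card_fin]
    omega

private lemma exists_cycle (ht : IsTournament r)
    (hnl : ¬ ∀ x y z : X, r x y → r y z → r x z) :
    ∃ x y z : X, r x y ∧ r y z ∧ r z x := by
  push_neg at hnl
  obtain ⟨x, y, z, hxy, hyz, hxz⟩ := hnl
  have hne : x ≠ z := by
    rintro rfl
    exact tourn_asymm ht hxy hyz
  exact ⟨x, y, z, hxy, hyz, tourn_total ht hne hxz⟩

/-- For every arc `x → y`, the difference `Γ⁺(y) \ Γ⁺(x)` is infinite. -/
private lemma rev_diff_infinite_arc [Infinite X] (ht : IsTournament r)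
    (h2hom : ∀ a b c d : X, a ≠ b → c ≠ d → ∃ f : Equiv.Perm X,
      (∀ x y : X, r x y ↔ r (f x) (f y)) ∧ ({f a, f b} : Set X) = {c, d})
    (hnl : ¬ ∀ x y z : X, r x y → r y z → r x z)
    {x y : X} (hxy : r x y) :
    ({v | r y v} \ {v | r x v}).Infinite := by
  classical
  obtain ⟨x0, y0, z0, h1, h2, h3⟩ := exists_cycle ht hnl
  have hD : ({v | r y0 v} \ {v | r z0 v}).Infinite := diff_infinite_arc ht h2hom h2
  have hsub : ({v | r y0 v} \ {v | r z0 v}) ⊆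
      (({v | r y0 v} \ {v | r x0 v}) ∪ ({v | r x0 v} \ {v | r z0 v})) ∪ {x0} := by
    rintro v ⟨hv1, hv2⟩
    by_cases hvx : v = x0
    · right; simp [hvx]
    · by_cases h : r x0 v
      · left; right; exact ⟨h, hv2⟩
      · left; left; exact ⟨hv1, h⟩
  have hun := hD.mono hsub
  rw [Set.infinite_union, Set.infinite_union] at hun
  have key : ({v | r y0 v} \ {v | r x0 v}).Infinite ∨
      ({v | r x0 v} \ {v | r z0 v}).Infinite := by
    rcases hun with (h | h) | h
    · exact Or.inl h
    · exact Or.inr h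
    · exact absurd h (by simp [Set.not_infinite])
  rcases key with hB | hB
  · -- transfer from arc (x0, y0) to arc (x, y)
    obtain ⟨g, hg, hga, hgb⟩ := arc_map ht h2hom hxy h1
    apply Set.Infinite.of_image g
    have himg : g '' ({v | r y v} \ {v | r x v}) = {v | r y0 v} \ {v | r x0 v} := by
      rw [diff_image hg y x, hga, hgb]
    rw [himg]; exact hB
  · -- transfer from arc (z0, x0) to arc (x, y)
    obtain ⟨g, hg, hga, hgb⟩ := arc_map ht h2hom hxy h3
    apply Set.Infinite.of_image g
    have himg : g '' ({v | r y v} \ {v | r x v}) = {v | r x0 v} \ {v | r z0 v} := by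
      rw [diff_image hg y x, hga, hgb]
    rw [himg]; exact hB

private lemma part1 [Infinite X] (ht : IsTournament r)
    (h2hom : ∀ a b c d : X, a ≠ b → c ≠ d → ∃ f : Equiv.Perm X,
      (∀ x y : X, r x y ↔ r (f x) (f y)) ∧ ({f a, f b} : Set X) = {c, d})
    (hnl : ¬ ∀ x y z : X, r x y → r y z → r x z) :
    ∀ x y : X, x ≠ y →
      ({v | r x v} \ {v | r y v} : Set X).Infinite ∧
      ({v | r y v} \ {v | r x v} : Set X).Infinite := by
  intro x y hne
  by_cases hxy : r x y
  · exact ⟨diff_infinite_arc ht h2hom hxy, rev_diff_infinite_arc ht h2hom hnl hxy⟩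
  · have hyx : r y x := tourn_total ht hne hxy
    exact ⟨rev_diff_infinite_arc ht h2hom hnl hyx, diff_infinite_arc ht h2hom hyx⟩

end Part1

section Step

variable {α : Type*} [Fintype α] {q : α → α → Prop}

/-- A transitive module lying inside `S`. -/
private def IsCM (q : α → α → Prop) (S M : Set α) : Prop :=
  M ⊆ S ∧ (∀ y ∈ S \ M, (∀ m ∈ M, q y m) ∨ (∀ m ∈ M, q m y)) ∧
    (∀ x ∈ M, ∀ y ∈ M, ∀ w ∈ M, q x y → q y w → q x w)

private lemma IsCM.union (hasym : ∀ x y : α, q x y → ¬ q y x)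
    {S M N : Set α} (hM : IsCM q S M) (hN : IsCM q S N)
    (hMN : (M ∩ N).Nonempty) : IsCM q S (M ∪ N) := by
  obtain ⟨p, hpM, hpN⟩ := hMN
  refine ⟨Set.union_subset hM.1 hN.1, ?_, ?_⟩
  · intro y hy
    have hyM : y ∈ S \ M := ⟨hy.1, fun h => hy.2 (Or.inl h)⟩
    have hyN : y ∈ S \ N := ⟨hy.1, fun h => hy.2 (Or.inr h)⟩
    rcases hM.2.1 y hyM with h1 | h1 <;> rcases hN.2.1 y hyN with h2 | h2
    · left; rintro m (hm | hm)
      exacts [h1 m hm, h2 m hm]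
    · exact absurd (h2 p hpN) (hasym _ _ (h1 p hpM))
    · exact absurd (h1 p hpM) (hasym _ _ (h2 p hpN))
    · right; rintro m (hm | hm)
      exacts [h1 m hm, h2 m hm]
  · intro x hx y hy w hw hxy hyw
    by_cases hxM : x ∈ M <;> by_cases hyM : y ∈ M <;> by_cases hwM : w ∈ M
    · exact hM.2.2 x hxM y hyM w hwM hxy hyw
    · -- x, y ∈ M, w ∉ M hence w ∈ N ⊆ S
      have hwS : w ∈ S \ M := ⟨hN.1 (hw.resolve_left hwM), hwM⟩
      rcases hM.2.1 w hwS with h | h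
      · exact absurd (h y hyM) (hasym _ _ hyw)
      · exact h x hxM
    · -- x, w ∈ M, y ∉ M
      have hyS : y ∈ S \ M := ⟨hN.1 (hy.resolve_left hyM), hyM⟩
      rcases hM.2.1 y hyS with h | h
      · exact absurd (h x hxM) (hasym _ _ hxy)
      · exact absurd (h w hwM) (hasym _ _ hyw)
    · -- x ∈ M only
      by_cases hxN : x ∈ N
      · exact hN.2.2 x hxN y (hy.resolve_left hyM) w (hw.resolve_left hwM) hxy hyw
      · have hxS : x ∈ S \ N := ⟨hM.1 hxM, hxN⟩
        rcases hN.2.1 x hxS with h | h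
        · exact h w (hw.resolve_left hwM)
        · exact absurd (h y (hy.resolve_left hyM)) (hasym _ _ hxy)
    · -- y, w ∈ M, x ∉ M
      have hxS : x ∈ S \ M := ⟨hN.1 (hx.resolve_left hxM), hxM⟩
      rcases hM.2.1 x hxS with h | h
      · exact h w hwM
      · exact absurd (h y hyM) (hasym _ _ hxy)
    · -- y ∈ M only
      by_cases hyN : y ∈ N
      · exact hN.2.2 x (hx.resolve_left hxM) y hyN w (hw.resolve_left hwM) hxy hyw
      · have hyS : y ∈ S \ N := ⟨hM.1 hyM, hyN⟩
        rcases hN.2.1 y hyS with h | h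
        · exact absurd (h x (hx.resolve_left hxM)) (hasym _ _ hxy)
        · exact absurd (h w (hw.resolve_left hwM)) (hasym _ _ hyw)
    · -- w ∈ M only
      by_cases hwN : w ∈ N
      · exact hN.2.2 x (hx.resolve_left hxM) y (hy.resolve_left hyM) w hwN hxy hyw
      · have hwS : w ∈ S \ N := ⟨hM.1 hwM, hwN⟩
        rcases hN.2.1 w hwS with h | h
        · exact absurd (h y (hy.resolve_left hyM)) (hasym _ _ hyw)
        · exact h x (hx.resolve_left hxM)
    · exact hN.2.2 x (hx.resolve_left hxM) y (hy.resolve_left hyM) w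
        (hw.resolve_left hwM) hxy hyw

private lemma IsCM.image {S M : Set α} (f : α ≃ α)
    (hf : ∀ x y : α, q x y ↔ q (f x) (f y))
    (hfS : ∀ x : α, f x ∈ S ↔ x ∈ S) (hM : IsCM q S M) : IsCM q S (f '' M) := by
  refine ⟨?_, ?_, ?_⟩
  · rintro _ ⟨m, hm, rfl⟩
    exact (hfS m).mpr (hM.1 hm)
  · intro y hy
    have hx : f.symm y ∈ S \ M := by
      constructor
      · have := (hfS (f.symm y))
        rw [f.apply_symm_apply] at this
        exact this.mp hy.1
      · intro hc
        exact hy.2 ⟨f.symm y, hc, f.apply_symm_apply y⟩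
    rcases hM.2.1 (f.symm y) hx with h | h
    · left
      rintro _ ⟨m, hm, rfl⟩
      have := (hf (f.symm y) m).mp (h m hm)
      rwa [f.apply_symm_apply] at this
    · right
      rintro _ ⟨m, hm, rfl⟩
      have := (hf m (f.symm y)).mp (h m hm)
      rwa [f.apply_symm_apply] at this
  · rintro _ ⟨x, hx, rfl⟩ _ ⟨y, hy, rfl⟩ _ ⟨w, hw, rfl⟩ hxy hyw
    exact (hf x w).mp (hM.2.2 x hx y hy w hw ((hf x y).mpr hxy) ((hf y w).mpr hyw))

private lemma exists_top (hirr : ∀ x : α, ¬ q x x)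
    (htot : ∀ x y : α, x ≠ y → ¬ q x y → q y x) :
    ∀ (k : ℕ) (C : Set α), C.ncard ≤ k → C.Nonempty →
      (∀ x ∈ C, ∀ y ∈ C, ∀ w ∈ C, q x y → q y w → q x w) →
      ∃ t ∈ C, ∀ x ∈ C, x ≠ t → q t x := by
  intro k
  induction k with
  | zero =>
    intro C hck hne _
    have : C = ∅ := (Set.ncard_eq_zero C.toFinite).mp (Nat.le_zero.mp hck)
    exact absurd (this ▸ hne) (by simp)
  | succ k ih =>
    intro C hck hne htr
    obtain ⟨x, hx⟩ := hne
    set C' : Set α := {y ∈ C | q y x} with hC'def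
    have hsub : C' ⊆ C := fun y hy => hy.1
    by_cases hC' : C'.Nonempty
    · have hxC' : x ∉ C' := fun h => hirr x h.2
      have hCC' : C' ⊂ C := ⟨hsub, fun h => hxC' (h hx)⟩
      have hcard : C'.ncard ≤ k := by
        have := Set.ncard_lt_ncard hCC' C.toFinite
        omega
      have htr' : ∀ a ∈ C', ∀ b ∈ C', ∀ w ∈ C', q a b → q b w → q a w :=
        fun a ha b hb w hw => htr a (hsub ha) b (hsub hb) w (hsub hw)
      obtain ⟨t, htC', htop⟩ := ih C' hcard hC' htr'
      refine ⟨t, hsub htC', ?_⟩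
      intro y hyC hyt
      by_cases hyC' : y ∈ C'
      · exact htop y hyC' hyt
      · by_cases hyx : y = x
        · rw [hyx]; exact htC'.2
        · have hnyx : ¬ q y x := fun h => hyC' ⟨hyC, h⟩
          have hxy : q x y := htot y x hyx hnyx
          exact htr t (hsub htC') x hx y hyC htC'.2 hxy
    · refine ⟨x, hx, ?_⟩
      intro y hy hyx
      exact htot y x hyx (fun h => hC' ⟨y, hy, h⟩)

private lemma chain_fix (hirr : ∀ x : α, ¬ q x x)
    (hasym : ∀ x y : α, q x y → ¬ q y x)
    (htot : ∀ x y : α, x ≠ y → ¬ q x y → q y x)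
    (f : α ≃ α) (hf : ∀ x y : α, q x y ↔ q (f x) (f y)) :
    ∀ (k : ℕ) (C : Set α), C.ncard ≤ k → f '' C = C →
      (∀ x ∈ C, ∀ y ∈ C, ∀ w ∈ C, q x y → q y w → q x w) →
      ∀ c ∈ C, f c = c := by
  intro k
  induction k with
  | zero =>
    intro C hck _ _ c hc
    have : C = ∅ := (Set.ncard_eq_zero C.toFinite).mp (Nat.le_zero.mp hck)
    exact absurd (this ▸ hc) (by simp)
  | succ k ih =>
    intro C hck hfC htr c hc
    obtain ⟨t, htC, htop⟩ := exists_top hirr htot (k + 1) C hck ⟨c, hc⟩ htr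
    have hftC : f t ∈ C := by
      rw [← hfC]; exact Set.mem_image_of_mem f htC
    have hft : f t = t := by
      by_contra hne'
      have h1 : q t (f t) := htop (f t) hftC hne'
      obtain ⟨s, hsC, hst⟩ : ∃ s ∈ C, f s = t := by
        have := htC
        rw [← hfC] at this
        obtain ⟨s, hs, hst⟩ := this
        exact ⟨s, hs, hst⟩
      have hst' : s ≠ t := by
        rintro rfl
        exact hne' hst
      have h2 : q (f t) t := by
        have := (hf t s).mp (htop s hsC hst')
        rwa [hst] at this
      exact hasym _ _ h1 h2
    by_cases hct : c = t
    · rw [hct, hft]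
    · have hcard : (C \ {t}).ncard ≤ k := by
        have := Set.ncard_diff_singleton_of_mem htC
        have h0 : 0 < C.ncard := (Set.ncard_pos C.toFinite).mpr ⟨t, htC⟩
        omega
      have himg : f '' (C \ {t}) = C \ {t} := by
        rw [Set.image_diff f.injective, Set.image_singleton, hft, hfC]
      have htr' : ∀ x ∈ C \ {t}, ∀ y ∈ C \ {t}, ∀ w ∈ C \ {t},
          q x y → q y w → q x w :=
        fun x hx y hy w hw => htr x hx.1 y hy.1 w hw.1
      exact ih (C \ {t}) hcard himg htr' c ⟨hc, hct⟩

/-- Main fixing step: a transitive module `Z` inside an `f`-invariant set `S`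
with `|S \ Z| < |Z|` is fixed pointwise by the automorphism `f`. -/
private lemma step_fix (hirr : ∀ x : α, ¬ q x x)
    (hasym : ∀ x y : α, q x y → ¬ q y x)
    (htot : ∀ x y : α, x ≠ y → ¬ q x y → q y x)
    (f : α ≃ α) (hf : ∀ x y : α, q x y ↔ q (f x) (f y))
    (S Z : Set α) (hZS : Z ⊆ S)
    (hfS : ∀ x : α, f x ∈ S ↔ x ∈ S)
    (hmod : ∀ y ∈ S \ Z, (∀ z ∈ Z, q y z) ∨ (∀ z ∈ Z, q z y))
    (htr : ∀ x ∈ Z, ∀ y ∈ Z, ∀ w ∈ Z, q x y → q y w → q x w)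
    (hcard : (S \ Z).ncard < Z.ncard) :
    ∀ z ∈ Z, f z = z := by
  classical
  have hZne : Z.Nonempty := Set.nonempty_of_ncard_ne_zero (by omega)
  obtain ⟨z0, hz0⟩ := hZne
  have hZcm : IsCM q S Z := ⟨hZS, hmod, htr⟩
  set C : Set α := {x | ∃ M, IsCM q S M ∧ Z ⊆ M ∧ x ∈ M} with hCdef
  have hZC : Z ⊆ C := fun z hz => ⟨Z, hZcm, subset_rfl, hz⟩
  have hCcm : IsCM q S C := by
    refine ⟨?_, ?_, ?_⟩
    · rintro x ⟨M, hM, _, hxM⟩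
      exact hM.1 hxM
    · intro y hy
      have hyz0 : y ≠ z0 := by
        rintro rfl
        exact hy.2 (hZC hz0)
      by_cases hq : q y z0
      · left
        rintro m ⟨M, hM, hZM, hmM⟩
        have hyM : y ∈ S \ M := ⟨hy.1, fun h => hy.2 ⟨M, hM, hZM, h⟩⟩
        rcases hM.2.1 y hyM with h | h
        · exact h m hmM
        · exact absurd (h z0 (hZM hz0)) (hasym _ _ hq)
      · right
        have hz0y : q z0 y := htot y z0 hyz0 hq
        rintro m ⟨M, hM, hZM, hmM⟩
        have hyM : y ∈ S \ M := ⟨hy.1, fun h => hy.2 ⟨M, hM, hZM, h⟩⟩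
        rcases hM.2.1 y hyM with h | h
        · exact absurd (h z0 (hZM hz0)) (fun hh => hasym _ _ hz0y hh)
        · exact h m hmM
    · rintro x ⟨Mx, hMx, hZMx, hxMx⟩ y ⟨My, hMy, hZMy, hyMy⟩ w ⟨Mw, hMw, hZMw, hwMw⟩ hxy hyw
      have h12 : IsCM q S (Mx ∪ My) := hMx.union hasym hMy ⟨z0, hZMx hz0, hZMy hz0⟩
      have h123 : IsCM q S ((Mx ∪ My) ∪ Mw) :=
        h12.union hasym hMw ⟨z0, Or.inl (hZMx hz0), hZMw hz0⟩
      exact h123.2.2 x (Or.inl (Or.inl hxMx)) y (Or.inl (Or.inr hyMy)) w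
        (Or.inr hwMw) hxy hyw
  have hCimg : f '' C = C := by
    have himgcm : IsCM q S (f '' C) := hCcm.image f hf hfS
    have hfZ : (f '' Z ∩ Z).Nonempty := by
      by_contra h
      rw [Set.not_nonempty_iff_eq_empty] at h
      have hsub2 : f '' Z ⊆ S \ Z := by
        rintro _ ⟨z, hz, rfl⟩
        refine ⟨(hfS z).mpr (hZS hz), fun hmem => ?_⟩
        exact (Set.eq_empty_iff_forall_notMem.mp h) (f z)
          ⟨Set.mem_image_of_mem f hz, hmem⟩
      have h1 : (f '' Z).ncard = Z.ncard := Set.ncard_image_of_injective Z f.injective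
      have h2 := Set.ncard_le_ncard hsub2 (S \ Z).toFinite
      omega
    obtain ⟨e, heF, heZ⟩ := hfZ
    have hecm : e ∈ f '' C := by
      obtain ⟨z, hz, rfl⟩ := heF
      exact Set.mem_image_of_mem f (hZC hz)
    have hUcm : IsCM q S (C ∪ f '' C) := hCcm.union hasym himgcm ⟨e, hZC heZ, hecm⟩
    have hsubC : C ∪ f '' C ⊆ C := by
      rintro x hx
      exact ⟨C ∪ f '' C, hUcm, fun z hz => Or.inl (hZC hz), hx⟩
    have himg_sub : f '' C ⊆ C := fun x hx => hsubC (Or.inr hx)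
    refine (Set.eq_of_subset_of_ncard_le himg_sub ?_ C.toFinite)
    rw [Set.ncard_image_of_injective _ f.injective]
  intro z hz
  exact chain_fix hirr hasym htot f hf C.ncard C le_rfl hCimg hCcm.2.2 z (hZC hz)

end Step

section Part2

variable {X : Type*} {r : X → X → Prop}

/-- Pigeonhole uniformisation: inside an infinite set we can find an infinite
subset on which every element of a fixed finite set looks constant. -/
private lemma exists_uniform (ht : IsTournament r) (W : Finset X) {S : Set X}
    (hS : S.Infinite) :
    ∃ S' : Set X, S' ⊆ S ∧ S'.Infinite ∧
      ∀ w ∈ W, (∀ z ∈ S', r w z) ∨ (∀ z ∈ S', ¬ r w z) := by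
  classical
  induction W using Finset.induction_on with
  | empty => exact ⟨S, subset_rfl, hS, by simp⟩
  | @insert w W hw ih =>
    obtain ⟨S1, hS1s, hS1i, hS1u⟩ := ih
    have hsplit : S1 ⊆ {z ∈ S1 | r w z} ∪ {z ∈ S1 | ¬ r w z} := by
      intro z hz
      by_cases h : r w z
      · exact Or.inl ⟨hz, h⟩
      · exact Or.inr ⟨hz, h⟩
    have := hS1i.mono hsplit
    rw [Set.infinite_union] at this
    rcases this with h | h
    · refine ⟨{z ∈ S1 | r w z}, fun z hz => hS1s hz.1, h, ?_⟩
      intro w' hw'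
      rcases Finset.mem_insert.mp hw' with rfl | hw'W
      · exact Or.inl (fun z hz => hz.2)
      · rcases hS1u w' hw'W with h' | h'
        · exact Or.inl (fun z hz => h' z hz.1)
        · exact Or.inr (fun z hz => h' z hz.1)
    · refine ⟨{z ∈ S1 | ¬ r w z}, fun z hz => hS1s hz.1, h, ?_⟩
      intro w' hw'
      rcases Finset.mem_insert.mp hw' with rfl | hw'W
      · exact Or.inr (fun z hz => hz.2)
      · rcases hS1u w' hw'W with h' | h'
        · exact Or.inl (fun z hz => h' z hz.1)
        · exact Or.inr (fun z hz => h' z hz.1)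

/-- Build one chain stage: a transitive chain of fresh vertices, inside
`Γ⁺(a) \ Γ⁺(b)`, uniform over the finite set `W`. -/
private lemma exists_stage (ht : IsTournament r)
    (hD : ∀ a b : X, a ≠ b → ({v | r a v} \ {v | r b v} : Set X).Infinite)
    (W : Finset X) {a b : X} (hab : a ≠ b) (m : ℕ) :
    ∃ c : Fin m → X,
      (∀ i, c i ∉ W) ∧ (∀ i, r a (c i) ∧ ¬ r b (c i)) ∧
      (∀ i j : Fin m, i < j → r (c i) (c j)) ∧
      (∀ w ∈ W, (∀ i, r w (c i)) ∨ (∀ i, ¬ r w (c i))) := by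
  have h1 : (({v | r a v} \ {v | r b v}) \ ↑W : Set X).Infinite :=
    (hD a b hab).diff W.finite_toSet
  obtain ⟨S', hS's, hS'i, hS'u⟩ := exists_uniform ht W h1
  obtain ⟨c, hc1, hc2⟩ := exists_chain_set ht hS'i m
  refine ⟨c, ?_, ?_, hc2, ?_⟩
  · intro i
    exact fun h => (hS's (hc1 i)).2 h
  · intro i
    exact ⟨(hS's (hc1 i)).1.1, (hS's (hc1 i)).1.2⟩
  · intro w hw
    rcases hS'u w hw with h | h
    · exact Or.inl (fun i => h _ (hc1 i))
    · exact Or.inr (fun i => h _ (hc1 i))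

/-- The recursive construction: given a list of (separating) pairs, build a finite
superset `V` of `W0` such that every automorphism of `V` fixes `V \ W0` pointwise,
and every listed pair has a separating witness in `V \ W0`. -/
private lemma rec_build [Infinite X] (ht : IsTournament r)
    (hD : ∀ a b : X, a ≠ b → ({v | r a v} \ {v | r b v} : Set X).Infinite) :
    ∀ (ps : List (X × X)), (∀ p ∈ ps, p.1 ≠ p.2) → ∀ (W0 : Finset X),
      ∃ V : Finset X, W0 ⊆ V ∧
        (∀ (f : {x // x ∈ V} ≃ {x // x ∈ V}),
            (∀ a b : {x // x ∈ V}, r (a : X) (b : X) ↔ r ((f a : X)) ((f b : X))) →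
            ∀ x : {x // x ∈ V}, (x : X) ∉ W0 → f x = x) ∧
        (∀ p ∈ ps, ∃ z, z ∈ V ∧ z ∉ W0 ∧ r p.1 z ∧ ¬ r p.2 z) := by
  classical
  intro ps
  induction ps with
  | nil =>
    intro _ W0
    exact ⟨W0, subset_rfl, fun f hf x hx => absurd x.2 hx, by simp⟩
  | cons p rest ih =>
    intro hps W0
    have hpne : p.1 ≠ p.2 := hps p List.mem_cons_self
    obtain ⟨c, hcW, hcab, hcord, hcu⟩ := exists_stage ht hD W0 hpne (W0.card + 1)
    have hcinj : Function.Injective c := by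
      intro i j hij
      by_contra hne
      rcases Ne.lt_or_gt hne with hlt | hlt
      · exact ht.1 _ (hij ▸ hcord _ _ hlt)
      · exact ht.1 _ (hij ▸ hcord _ _ hlt)
    have hord_lt : ∀ i j : Fin (W0.card + 1), r (c i) (c j) → i < j := by
      intro i j hr
      rcases lt_trichotomy i j with h | h | h
      · exact h
      · exact absurd hr (h ▸ ht.1 (c i))
      · exact absurd hr (tourn_asymm ht (hcord _ _ h))
    set Zf : Finset X := Finset.image c Finset.univ with hZf
    have hZfcard : Zf.card = W0.card + 1 := by
      rw [hZf, Finset.card_image_of_injective _ hcinj, Finset.card_univ, Fintype.card_fin]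
    set W1 : Finset X := W0 ∪ Zf with hW1
    obtain ⟨V, hWV, hA, hB⟩ := ih (fun z hz => hps z (List.mem_cons_of_mem _ hz)) W1
    have hW0W1 : W0 ⊆ W1 := Finset.subset_union_left
    have hZfW1 : Zf ⊆ W1 := Finset.subset_union_right
    have hW0V : W0 ⊆ V := hW0W1.trans hWV
    refine ⟨V, hW0V, ?_, ?_⟩
    · intro f hf x hxW0
      by_cases hxW1 : (x : X) ∈ W1
      · have hxZ : (x : X) ∈ Zf := by
          rcases Finset.mem_union.mp hxW1 with h | h
          · exact absurd h hxW0
          · exact h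
        -- apply the fixing step on the subtype
        set q : {x // x ∈ V} → {x // x ∈ V} → Prop := fun u v => r (u : X) (v : X) with hq
        have hirr' : ∀ u : {x // x ∈ V}, ¬ q u u := fun u => ht.1 (u : X)
        have hasym' : ∀ u v : {x // x ∈ V}, q u v → ¬ q v u := fun u v h =>
          tourn_asymm ht h
        have htot' : ∀ u v : {x // x ∈ V}, u ≠ v → ¬ q u v → q v u := by
          intro u v huv h
          exact tourn_total ht (fun hh => huv (Subtype.ext hh)) h
        set S : Set {x // x ∈ V} := {u | (u : X) ∈ W1} with hSdef
        set Z : Set {x // x ∈ V} := {u | (u : X) ∈ Zf} with hZdef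
        have hZS : Z ⊆ S := fun u hu => hZfW1 hu
        have hcompl : ∀ u : {x // x ∈ V}, (u : X) ∉ W1 → f u = u := fun u hu =>
          hA f hf u hu
        have hfS : ∀ u : {x // x ∈ V}, f u ∈ S ↔ u ∈ S := by
          intro u
          constructor
          · intro hfu
            by_contra hu
            have h' := hcompl u hu
            rw [h'] at hfu
            exact hu hfu
          · intro hu
            by_contra hfu
            have h' := hcompl (f u) hfu
            have h'' := f.injective h'
            rw [h''] at hfu
            exact hfu hu
        have hmod : ∀ y ∈ S \ Z, (∀ z ∈ Z, q y z) ∨ (∀ z ∈ Z, q z y) := by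
          intro y hy
          have hyW0 : (y : X) ∈ W0 := by
            rcases Finset.mem_union.mp hy.1 with h | h
            · exact h
            · exact absurd h hy.2
          rcases hcu (y : X) hyW0 with h | h
          · left
            intro z hz
            obtain ⟨i, _, hi⟩ := Finset.mem_image.mp (show (z : X) ∈ Zf from hz)
            show r (y : X) (z : X)
            rw [← hi]; exact h i
          · right
            intro z hz
            obtain ⟨i, _, hi⟩ := Finset.mem_image.mp (show (z : X) ∈ Zf from hz)
            show r (z : X) (y : X)
            rw [← hi]
            refine tourn_total ht ?_ (h i)
            intro hh
            exact hcW i (hh ▸ hyW0)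
        have htrZ : ∀ u ∈ Z, ∀ v ∈ Z, ∀ w ∈ Z, q u v → q v w → q u w := by
          intro u hu v hv w hw huv hvw
          obtain ⟨i, _, hi⟩ := Finset.mem_image.mp (show (u : X) ∈ Zf from hu)
          obtain ⟨j, _, hj⟩ := Finset.mem_image.mp (show (v : X) ∈ Zf from hv)
          obtain ⟨k, _, hk⟩ := Finset.mem_image.mp (show (w : X) ∈ Zf from hw)
          have h1 : r (c i) (c j) := by rw [hi, hj]; exact huv
          have h2 : r (c j) (c k) := by rw [hj, hk]; exact hvw
          have : i < k := lt_trans (hord_lt _ _ h1) (hord_lt _ _ h2)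
          show r (u : X) (w : X)
          rw [← hi, ← hk]
          exact hcord _ _ this
        have hcard : (S \ Z).ncard < Z.ncard := by
          have hZn : Z.ncard = W0.card + 1 := by
            have hval : Subtype.val '' Z = (↑Zf : Set X) := by
              ext v
              constructor
              · rintro ⟨u, hu, rfl⟩
                exact hu
              · intro hv
                exact ⟨⟨v, hWV (hZfW1 hv)⟩, hv, rfl⟩
            have := Set.ncard_image_of_injective Z (Subtype.val_injective (p := (· ∈ V)))
            rw [hval, Set.ncard_coe_finset] at this
            omega
          have hSn : (S \ Z).ncard ≤ W0.card := by
            have hsub' : Subtype.val '' (S \ Z) ⊆ (↑W0 : Set X) := by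
              rintro _ ⟨u, hu, rfl⟩
              rcases Finset.mem_union.mp hu.1 with h | h
              · exact h
              · exact absurd h hu.2
            have h1 := Set.ncard_le_ncard hsub' W0.finite_toSet
            have h2 := Set.ncard_image_of_injective (S \ Z)
              (Subtype.val_injective (p := (· ∈ V)))
            rw [Set.ncard_coe_finset] at h1
            omega
          omega
        exact step_fix hirr' hasym' htot' f hf S Z hZS hfS hmod htrZ hcard x hxZ
      · exact hA f hf x hxW1
    · intro z hz
      rcases List.mem_cons.mp hz with rfl | hz'
      · have h0 : c 0 ∈ Zf := Finset.mem_image_of_mem c (Finset.mem_univ _)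
        exact ⟨c 0, hWV (hZfW1 h0), hcW 0, (hcab 0).1, (hcab 0).2⟩
      · obtain ⟨w, hwV, hwW1, hw1, hw2⟩ := hB z hz'
        exact ⟨w, hwV, fun h => hwW1 (hW0W1 h), hw1, hw2⟩

end Part2

/-- if the automorphism group of an infinite tournament is 2-homogeneous and the
    tournament is not a total order, then all out-neighbour set differences are infinite and
    the tournament is cofinally rigid. -/
theorem stmt16 {X : Type*} [Infinite X] (r : X → X → Prop) (ht : IsTournament r)
    (h2hom : ∀ a b c d : X, a ≠ b → c ≠ d → ∃ f : Equiv.Perm X,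
      (∀ x y : X, r x y ↔ r (f x) (f y)) ∧ ({f a, f b} : Set X) = {c, d})
    (hnl : ¬ ∀ x y z : X, r x y → r y z → r x z) :
    (∀ x y : X, x ≠ y →
      ({v | r x v} \ {v | r y v} : Set X).Infinite ∧
      ({v | r y v} \ {v | r x v} : Set X).Infinite) ∧
    (∀ U : Finset X, ∃ V : Finset X, U ⊆ V ∧
      ∀ f : {x // x ∈ V} ≃ {x // x ∈ V},
        (∀ a b : {x // x ∈ V}, r (a : X) (b : X) ↔ r (f a : X) (f b : X)) →
        ∀ a : {x // x ∈ V}, f a = a) := by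
  classical
  have hP1 := part1 ht h2hom hnl
  refine ⟨hP1, ?_⟩
  intro U
  have hD : ∀ a b : X, a ≠ b → ({v | r a v} \ {v | r b v} : Set X).Infinite :=
    fun a b hab => (hP1 a b hab).1
  set ps : List (X × X) := U.offDiag.toList with hps
  have hpsne : ∀ p ∈ ps, p.1 ≠ p.2 := by
    intro p hp
    rw [hps, Finset.mem_toList, Finset.mem_offDiag] at hp
    exact hp.2.2
  obtain ⟨V, hUV, hA, hB⟩ := rec_build ht hD ps hpsne U
  refine ⟨V, hUV, ?_⟩
  intro f hf a
  by_cases haU : (a : X) ∈ U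
  · by_contra hfa
    have hfaU : ((f a : X)) ∈ U := by
      by_contra hfaU
      have h' := hA f hf (f a) hfaU
      exact hfa (f.injective h')
    have hpair : ((a : X), ((f a : X))) ∈ U.offDiag := by
      rw [Finset.mem_offDiag]
      exact ⟨haU, hfaU, fun h => hfa (Subtype.ext h).symm⟩
    have hpairps : ((a : X), ((f a : X))) ∈ ps := by
      rw [hps, Finset.mem_toList]
      exact hpair
    obtain ⟨z, hzV, hzU, hz1, hz2⟩ := hB _ hpairps
    have hzfix : f ⟨z, hzV⟩ = ⟨z, hzV⟩ := hA f hf ⟨z, hzV⟩ hzU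
    have := (hf a ⟨z, hzV⟩).mp hz1
    rw [hzfix] at this
    exact hz2 this
  · exact hA f hf a haU
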